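/- arXiv:2010.00137 — 3 statements merged into one kernel-verified Lean document; each statement's English description precedes it below -/
import Mathlib

section
/- Let d ≥ 1, let D ∈ ℝ^{d×d} be a diagonal positive semidefinite matrix with largest diagonal entry D_max, and let n ≥ 1 be a real number. Then for every x ∈ ℝ^d with ‖x‖ = 1, we have −D_max²/(2n) ≤ n·log(xᵀ(I + D/n)x) − xᵀDx ≤ 0. -/
open Matrix Real

lemma aux_log_quad (t : ℝ) (ht : 0 ≤ t) : t - t ^ 2 / 2 ≤ Real.log (1 + t) := by
  have key : ∀ s : ℝ, 0 ≤ s →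
      HasDerivAt (fun u => Real.log (1 + u) - u + u ^ 2 / 2)
        (1 / (1 + s) - 1 + s) s := by
    intro s hs
    have h1 : HasDerivAt (fun u : ℝ => 1 + u) 1 s := by
      simpa using (hasDerivAt_id s).const_add (1 : ℝ)
    have h2 : HasDerivAt (fun u : ℝ => Real.log (1 + u)) (1 / (1 + s)) s := by
      have hne : (1 : ℝ) + s ≠ 0 := by positivity
      have := (Real.hasDerivAt_log hne).comp s h1
      simpa [one_div, Function.comp_def] using this
    have h3 : HasDerivAt (fun u : ℝ => u ^ 2 / 2) s s := by
      have := (hasDerivAt_pow 2 s).div_const 2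
      simpa using this
    simpa [Pi.add_def, Pi.sub_def] using (h2.sub (hasDerivAt_id s)).add h3
  have mono : MonotoneOn (fun u => Real.log (1 + u) - u + u ^ 2 / 2)
      (Set.Ici (0 : ℝ)) := by
    apply monotoneOn_of_deriv_nonneg (convex_Ici 0)
    · exact fun s hs => ((key s hs).continuousAt).continuousWithinAt
    · intro s hs
      rw [interior_Ici] at hs
      exact ((key s hs.le).differentiableAt).differentiableWithinAt
    · intro s hs
      rw [interior_Ici] at hs
      have hs' : (0 : ℝ) ≤ s := le_of_lt hs
      rw [(key s hs').deriv]
      have hp : (0 : ℝ) < 1 + s := by linarith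
      have : (1 : ℝ) - s ≤ 1 / (1 + s) := by
        rw [le_div_iff₀ hp]; nlinarith
      linarith
  have h0 := mono (Set.self_mem_Ici) (Set.mem_Ici.mpr ht) ht
  simp at h0
  linarith

theorem stmt_0 (d : ℕ) (hd : 1 ≤ d) (D : Matrix (Fin d) (Fin d) ℝ)
    (hdiag : D.IsDiag) (hpsd : ∀ i, 0 ≤ D i i)
    (Dmax : ℝ) (hle : ∀ i, D i i ≤ Dmax) (hmem : ∃ i, D i i = Dmax)
    (n : ℝ) (hn : 1 ≤ n)
    (x : EuclideanSpace ℝ (Fin d)) (hx : ‖x‖ = 1) :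
    -Dmax ^ 2 / (2 * n) ≤ n * Real.log (x ⬝ᵥ ((1 + n⁻¹ • D) *ᵥ x)) - x ⬝ᵥ (D *ᵥ x) ∧
      n * Real.log (x ⬝ᵥ ((1 + n⁻¹ • D) *ᵥ x)) - x ⬝ᵥ (D *ᵥ x) ≤ 0 := by
  have hn0 : (0 : ℝ) < n := lt_of_lt_of_le one_pos hn
  -- norm fact
  have hnorm : ∑ i, x i ^ 2 = 1 := by
    have := EuclideanSpace.norm_eq x
    rw [hx] at this
    have h1 : Real.sqrt (∑ i, ‖x i‖ ^ 2) = 1 := this.symm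
    have h2 : ∑ i, ‖x i‖ ^ 2 = 1 := Real.sqrt_eq_one.mp h1
    simpa [Real.norm_eq_abs, sq_abs] using h2
  -- quadratic form
  have hDv : ∀ i, (D *ᵥ (x : Fin d → ℝ)) i = D i i * x i := by
    intro i
    unfold Matrix.mulVec dotProduct
    rw [Finset.sum_eq_single i]
    · intro j _ hj
      show D i j * x j = 0
      rw [hdiag (Ne.symm hj), zero_mul]
    · intro h; exact absurd (Finset.mem_univ i) h
  have hq : x ⬝ᵥ (D *ᵥ (x : Fin d → ℝ)) = ∑ i, D i i * x i ^ 2 := by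
    unfold dotProduct
    apply Finset.sum_congr rfl
    intro i _
    rw [hDv i]; ring
  set q : ℝ := ∑ i, D i i * x i ^ 2 with hqdef
  have hq0 : 0 ≤ q := Finset.sum_nonneg fun i _ => mul_nonneg (hpsd i) (sq_nonneg _)
  have hDmax0 : 0 ≤ Dmax := by
    obtain ⟨i, hi⟩ := hmem
    exact hi ▸ hpsd i
  have hqD : q ≤ Dmax := by
    calc q ≤ ∑ i, Dmax * x i ^ 2 :=
          Finset.sum_le_sum fun i _ => mul_le_mul_of_nonneg_right (hle i) (sq_nonneg _)
      _ = Dmax := by rw [← Finset.mul_sum, hnorm, mul_one]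
  -- the argument of log
  have hxx : (x : Fin d → ℝ) ⬝ᵥ (x : Fin d → ℝ) = 1 := by
    unfold dotProduct
    rw [← hnorm]
    exact Finset.sum_congr rfl fun i _ => (sq (x i)).symm
  have harg : x ⬝ᵥ ((1 + n⁻¹ • D) *ᵥ (x : Fin d → ℝ)) = 1 + q / n := by
    rw [Matrix.add_mulVec, Matrix.one_mulVec, Matrix.smul_mulVec,
      dotProduct_add, dotProduct_smul, hxx, hq]
    simp [smul_eq_mul, div_eq_inv_mul]
  rw [harg, hq]
  have ht : 0 ≤ q / n := div_nonneg hq0 hn0.le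
  have hpos : (0 : ℝ) < 1 + q / n := by linarith
  constructor
  · have hlow := aux_log_quad (q / n) ht
    have : n * (q / n - (q / n) ^ 2 / 2) ≤ n * Real.log (1 + q / n) :=
      mul_le_mul_of_nonneg_left hlow hn0.le
    have hexp : n * (q / n - (q / n) ^ 2 / 2) = q - q ^ 2 / (2 * n) := by
      field_simp
    have hq2 : q ^ 2 ≤ Dmax ^ 2 := pow_le_pow_left₀ hq0 hqD 2
    have h2n : (0 : ℝ) < 2 * n := by linarith
    rw [hexp] at this
    have hdd : q ^ 2 / (2 * n) ≤ Dmax ^ 2 / (2 * n) := by gcongr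
    rw [neg_div]
    linarith
  · have hup : Real.log (1 + q / n) ≤ q / n := by
      have := Real.log_le_sub_one_of_pos hpos
      linarith
    have : n * Real.log (1 + q / n) ≤ n * (q / n) :=
      mul_le_mul_of_nonneg_left hup hn0.le
    rw [mul_div_cancel₀ _ hn0.ne'] at this
    linarith
end

section
/- Let d ≥ 2, let D ∈ ℝ^{d×d} be a diagonal positive semidefinite matrix with largest diagonal entry D_max, and let n ≥ 1 be a real number. Let σ denote the uniform surface measure on the unit sphere S^{d−1} ⊂ ℝ^d, and define the normalized densities p(x) = exp(xᵀDx) / ∫_{S^{d−1}} exp(yᵀDy) dσ(y) and q(x) = (xᵀ(I + D/n)x)^n / ∫_{S^{d−1}} (yᵀ(I + D/n)y)^n dσ(y). Then for every x ∈ S^{d−1}, both p(x)/q(x) ≤ exp(D_max²/(2n)) and q(x)/p(x) ≤ exp(D_max²/(2n)). -/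
open Matrix Real MeasureTheory

lemma aux_log (u : ℝ) (hu : 0 ≤ u) : u - u ^ 2 / 2 ≤ Real.log (1 + u) := by
  set f : ℝ → ℝ := fun w => Real.log (1 + w) - (w - w ^ 2 / 2) with hf
  have hderiv : ∀ v : ℝ, 0 < v → HasDerivAt f ((1 + v)⁻¹ - (1 - v)) v := by
    intro v hv
    have h1 : HasDerivAt (fun w : ℝ => 1 + w) 1 v := by
      simpa using (hasDerivAt_id v).const_add 1
    have h2 : HasDerivAt (fun w : ℝ => Real.log (1 + w)) ((1 + v)⁻¹) v := by
      simpa using h1.log (by linarith)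
    have h3 : HasDerivAt (fun w : ℝ => w - w ^ 2 / 2) (1 - v) v := by
      have := ((hasDerivAt_pow 2 v).div_const 2)
      have := (hasDerivAt_id v).sub this
      exact this.congr_deriv (by norm_num)
    exact h2.sub h3
  have hcont : ContinuousOn f (Set.Ici 0) := by
    apply ContinuousOn.sub
    · apply ContinuousOn.log
      · fun_prop
      · intro w hw
        simp only [Set.mem_Ici] at hw
        positivity
    · fun_prop
  have hmono : MonotoneOn f (Set.Ici 0) := by
    apply monotoneOn_of_deriv_nonneg (convex_Ici 0) hcont
    · intro v hv
      rw [interior_Ici] at hv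
      exact (hderiv v hv).differentiableAt.differentiableWithinAt
    · intro v hv
      rw [interior_Ici] at hv
      simp only [Set.mem_Ioi] at hv
      rw [(hderiv v hv).deriv]
      have hv1 : (0:ℝ) < 1 + v := by linarith
      have h : (1 + v)⁻¹ - (1 - v) = v ^ 2 / (1 + v) := by
        field_simp
        ring
      rw [h]
      positivity
  have h0 : f 0 = 0 := by simp [hf]
  have := hmono (Set.self_mem_Ici) hu hu
  rw [h0] at this
  simp only [hf] at this
  linarith

lemma key_ineq (t n : ℝ) (ht : 0 ≤ t) (hn : 1 ≤ n) :
    (1 + t / n) ^ n ≤ Real.exp t ∧ Real.exp t ≤ (1 + t / n) ^ n * Real.exp (t ^ 2 / (2 * n)) := by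
  have hn0 : 0 < n := by linarith
  have hu : 0 ≤ t / n := by positivity
  have hpos : 0 < 1 + t / n := by linarith
  rw [Real.rpow_def_of_pos hpos, mul_comm]
  constructor
  · rw [Real.exp_le_exp]
    have := Real.log_le_sub_one_of_pos hpos
    have : Real.log (1 + t / n) ≤ t / n := by linarith
    calc n * Real.log (1 + t / n) ≤ n * (t / n) := by nlinarith
      _ = t := by field_simp
  · rw [← Real.exp_add, Real.exp_le_exp]
    have := aux_log (t / n) hu
    have h2 : t / n - (t / n) ^ 2 / 2 = (t - t ^ 2 / (2 * n)) / n := by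
      field_simp
    rw [h2] at this
    have : t - t ^ 2 / (2 * n) ≤ n * Real.log (1 + t / n) := by
      have := mul_le_mul_of_nonneg_left this (le_of_lt hn0)
      rw [mul_div_cancel₀ _ (ne_of_gt hn0)] at this
      linarith
    linarith

theorem stmt_2 (d : ℕ) (hd : 2 ≤ d) (D : Matrix (Fin d) (Fin d) ℝ)
    (hdiag : D.IsDiag) (hpsd : ∀ i, 0 ≤ D i i)
    (Dmax : ℝ) (hle : ∀ i, D i i ≤ Dmax) (hmem : ∃ i, D i i = Dmax)
    (n : ℝ) (hn : 1 ≤ n)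
    (σ : Measure (Metric.sphere (0 : EuclideanSpace ℝ (Fin d)) 1))
    (hσ : σ = (volume : Measure (EuclideanSpace ℝ (Fin d))).toSphere)
    (p q : Metric.sphere (0 : EuclideanSpace ℝ (Fin d)) 1 → ℝ)
    (hp : ∀ x, p x = Real.exp ((x : EuclideanSpace ℝ (Fin d)) ⬝ᵥ (D *ᵥ (x : EuclideanSpace ℝ (Fin d)))) /
        ∫ y, Real.exp ((y : EuclideanSpace ℝ (Fin d)) ⬝ᵥ (D *ᵥ (y : EuclideanSpace ℝ (Fin d)))) ∂σ)
    (hq : ∀ x, q x = ((x : EuclideanSpace ℝ (Fin d)) ⬝ᵥ ((1 + n⁻¹ • D) *ᵥ (x : EuclideanSpace ℝ (Fin d)))) ^ n /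
        ∫ y, ((y : EuclideanSpace ℝ (Fin d)) ⬝ᵥ ((1 + n⁻¹ • D) *ᵥ (y : EuclideanSpace ℝ (Fin d)))) ^ n ∂σ) :
    ∀ x, p x / q x ≤ Real.exp (Dmax ^ 2 / (2 * n)) ∧
      q x / p x ≤ Real.exp (Dmax ^ 2 / (2 * n)) := by
  have hn0 : 0 < n := by linarith
  -- norms on the sphere
  have hsum : ∀ y : Metric.sphere (0 : EuclideanSpace ℝ (Fin d)) 1,
      ∑ i, ((y : EuclideanSpace ℝ (Fin d)) i) ^ 2 = 1 := by
    intro y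
    have hy : ‖(y : EuclideanSpace ℝ (Fin d))‖ = 1 := by
      simpa using mem_sphere_zero_iff_norm.mp y.2
    have h := EuclideanSpace.norm_eq (y : EuclideanSpace ℝ (Fin d))
    rw [hy] at h
    have h3 : ∑ i, ‖(y : EuclideanSpace ℝ (Fin d)) i‖ ^ 2 = 1 :=
      Real.sqrt_eq_one.mp h.symm
    simpa [sq_abs] using h3
  -- quadratic form as a sum
  have hT : ∀ y : Metric.sphere (0 : EuclideanSpace ℝ (Fin d)) 1,
      (y : EuclideanSpace ℝ (Fin d)) ⬝ᵥ (D *ᵥ (y : EuclideanSpace ℝ (Fin d)))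
        = ∑ i, D i i * ((y : EuclideanSpace ℝ (Fin d)) i) ^ 2 := by
    intro y
    simp only [dotProduct, Matrix.mulVec]
    refine Finset.sum_congr rfl fun i _ => ?_
    rw [Finset.sum_eq_single i]
    · ring
    · intro j _ hj
      rw [hdiag (Ne.symm hj)]
      ring
    · simp
  have hT0 : ∀ y : Metric.sphere (0 : EuclideanSpace ℝ (Fin d)) 1,
      0 ≤ (y : EuclideanSpace ℝ (Fin d)) ⬝ᵥ (D *ᵥ (y : EuclideanSpace ℝ (Fin d))) := by
    intro y
    rw [hT y]
    exact Finset.sum_nonneg fun i _ => mul_nonneg (hpsd i) (sq_nonneg _)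
  have hTmax : ∀ y : Metric.sphere (0 : EuclideanSpace ℝ (Fin d)) 1,
      (y : EuclideanSpace ℝ (Fin d)) ⬝ᵥ (D *ᵥ (y : EuclideanSpace ℝ (Fin d))) ≤ Dmax := by
    intro y
    rw [hT y]
    calc ∑ i, D i i * ((y : EuclideanSpace ℝ (Fin d)) i) ^ 2
        ≤ ∑ i, Dmax * ((y : EuclideanSpace ℝ (Fin d)) i) ^ 2 :=
          Finset.sum_le_sum fun i _ => mul_le_mul_of_nonneg_right (hle i) (sq_nonneg _)
      _ = Dmax := by rw [← Finset.mul_sum, hsum y, mul_one]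
  have hDmax0 : 0 ≤ Dmax := by
    obtain ⟨i, hi⟩ := hmem
    exact hi ▸ hpsd i
  -- the second quadratic form
  have hQ : ∀ y : Metric.sphere (0 : EuclideanSpace ℝ (Fin d)) 1,
      (y : EuclideanSpace ℝ (Fin d)) ⬝ᵥ ((1 + n⁻¹ • D) *ᵥ (y : EuclideanSpace ℝ (Fin d)))
        = 1 + ((y : EuclideanSpace ℝ (Fin d)) ⬝ᵥ (D *ᵥ (y : EuclideanSpace ℝ (Fin d)))) / n := by
    intro y
    have hxx : (y : EuclideanSpace ℝ (Fin d)) ⬝ᵥ (y : EuclideanSpace ℝ (Fin d)) = 1 := by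
      have := hsum y
      simp only [dotProduct]
      simpa [sq] using this
    rw [Matrix.add_mulVec, Matrix.one_mulVec, dotProduct_add,
      Matrix.smul_mulVec, dotProduct_smul, hxx, smul_eq_mul]
    ring
  -- continuity
  have hcoord : ∀ i, Continuous fun y : Metric.sphere (0 : EuclideanSpace ℝ (Fin d)) 1 =>
      (y : EuclideanSpace ℝ (Fin d)) i := by
    intro i
    exact ((EuclideanSpace.proj i : EuclideanSpace ℝ (Fin d) →L[ℝ] ℝ).continuous).comp
      continuous_subtype_val
  have hcontT : Continuous fun y : Metric.sphere (0 : EuclideanSpace ℝ (Fin d)) 1 =>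
      (y : EuclideanSpace ℝ (Fin d)) ⬝ᵥ (D *ᵥ (y : EuclideanSpace ℝ (Fin d))) := by
    have heq : (fun y : Metric.sphere (0 : EuclideanSpace ℝ (Fin d)) 1 =>
        (y : EuclideanSpace ℝ (Fin d)) ⬝ᵥ (D *ᵥ (y : EuclideanSpace ℝ (Fin d))))
        = fun y : Metric.sphere (0 : EuclideanSpace ℝ (Fin d)) 1 =>
          ∑ i, D i i * ((y : EuclideanSpace ℝ (Fin d)) i) ^ 2 := funext hT
    rw [heq]
    exact continuous_finset_sum _ fun i _ => continuous_const.mul ((hcoord i).pow 2)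
  -- integrability of continuous functions
  subst hσ
  have hint : ∀ f : Metric.sphere (0 : EuclideanSpace ℝ (Fin d)) 1 → ℝ,
      Continuous f → Integrable f (volume : Measure (EuclideanSpace ℝ (Fin d))).toSphere := by
    intro f hf
    rw [← integrableOn_univ]
    exact hf.continuousOn.integrableOn_compact isCompact_univ
  have intA : Integrable (fun y : Metric.sphere (0 : EuclideanSpace ℝ (Fin d)) 1 =>
      Real.exp ((y : EuclideanSpace ℝ (Fin d)) ⬝ᵥ (D *ᵥ (y : EuclideanSpace ℝ (Fin d)))))
      (volume : Measure (EuclideanSpace ℝ (Fin d))).toSphere :=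
    hint _ (Real.continuous_exp.comp hcontT)
  have intB : Integrable (fun y : Metric.sphere (0 : EuclideanSpace ℝ (Fin d)) 1 =>
      (1 + ((y : EuclideanSpace ℝ (Fin d)) ⬝ᵥ (D *ᵥ (y : EuclideanSpace ℝ (Fin d)))) / n) ^ n)
      (volume : Measure (EuclideanSpace ℝ (Fin d))).toSphere := by
    apply hint
    exact (continuous_const.add (hcontT.div_const n)).rpow_const fun y => Or.inr (by linarith)
  -- positivity of the total measure
  have hσuniv : 0 < (((volume : Measure (EuclideanSpace ℝ (Fin d))).toSphere) Set.univ).toReal := by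
    rw [Measure.toSphere_apply_univ]
    have h1 : (volume (Metric.ball (0 : EuclideanSpace ℝ (Fin d)) 1)) ≠ 0 :=
      (Metric.measure_ball_pos _ _ one_pos).ne'
    have h2 : (volume (Metric.ball (0 : EuclideanSpace ℝ (Fin d)) 1)) ≠ ⊤ :=
      measure_ball_lt_top.ne
    have hdim : Module.finrank ℝ (EuclideanSpace ℝ (Fin d)) = d := by
      simp [finrank_euclideanSpace]
    rw [hdim]
    refine ENNReal.toReal_pos (mul_ne_zero ?_ h1) (ENNReal.mul_ne_top (ENNReal.natCast_ne_top d) h2)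
    exact Nat.cast_ne_zero.mpr (by omega)
  -- lower bounds on the integrals
  set C := Real.exp (Dmax ^ 2 / (2 * n)) with hC
  set A := ∫ y, Real.exp ((y : EuclideanSpace ℝ (Fin d)) ⬝ᵥ (D *ᵥ (y : EuclideanSpace ℝ (Fin d))))
      ∂(volume : Measure (EuclideanSpace ℝ (Fin d))).toSphere with hA
  set B := ∫ y, (1 + ((y : EuclideanSpace ℝ (Fin d)) ⬝ᵥ (D *ᵥ (y : EuclideanSpace ℝ (Fin d)))) / n) ^ n
      ∂(volume : Measure (EuclideanSpace ℝ (Fin d))).toSphere with hB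
  have hBpos : 0 < B := by
    have h1 : ∫ (_ : Metric.sphere (0 : EuclideanSpace ℝ (Fin d)) 1), (1:ℝ)
        ∂(volume : Measure (EuclideanSpace ℝ (Fin d))).toSphere ≤ B := by
      refine integral_mono (integrable_const 1) intB fun y => ?_
      have h0 := hT0 y
      have h1 : 0 ≤ ((y : EuclideanSpace ℝ (Fin d)) ⬝ᵥ (D *ᵥ (y : EuclideanSpace ℝ (Fin d)))) / n :=
        div_nonneg h0 hn0.le
      exact Real.one_le_rpow (by linarith) (by linarith)
    rw [integral_const, smul_eq_mul, mul_one, measureReal_def] at h1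
    linarith
  have hApos : 0 < A := by
    have h1 : ∫ (_ : Metric.sphere (0 : EuclideanSpace ℝ (Fin d)) 1), (1:ℝ)
        ∂(volume : Measure (EuclideanSpace ℝ (Fin d))).toSphere ≤ A := by
      refine integral_mono (integrable_const 1) intA fun y => ?_
      exact Real.one_le_exp (hT0 y)
    rw [integral_const, smul_eq_mul, mul_one, measureReal_def] at h1
    linarith
  -- comparisons between the integrals
  have hBA : B ≤ A :=
    integral_mono intB intA fun y => (key_ineq _ n (hT0 y) hn).1
  have hAB : A ≤ C * B := by
    have hpt : ∀ y : Metric.sphere (0 : EuclideanSpace ℝ (Fin d)) 1,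
        Real.exp ((y : EuclideanSpace ℝ (Fin d)) ⬝ᵥ (D *ᵥ (y : EuclideanSpace ℝ (Fin d))))
          ≤ (1 + ((y : EuclideanSpace ℝ (Fin d)) ⬝ᵥ (D *ᵥ (y : EuclideanSpace ℝ (Fin d)))) / n) ^ n * C := by
      intro y
      refine (key_ineq _ n (hT0 y) hn).2.trans ?_
      have : ((y : EuclideanSpace ℝ (Fin d)) ⬝ᵥ (D *ᵥ (y : EuclideanSpace ℝ (Fin d)))) ^ 2 ≤ Dmax ^ 2 :=
        pow_le_pow_left₀ (hT0 y) (hTmax y) 2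
      have hexp : Real.exp (((y : EuclideanSpace ℝ (Fin d)) ⬝ᵥ (D *ᵥ (y : EuclideanSpace ℝ (Fin d)))) ^ 2 / (2 * n)) ≤ C := by
        rw [hC, Real.exp_le_exp]
        apply div_le_div_of_nonneg_right this (by linarith)
      have hfy : (0:ℝ) ≤ (1 + ((y : EuclideanSpace ℝ (Fin d)) ⬝ᵥ (D *ᵥ (y : EuclideanSpace ℝ (Fin d)))) / n) ^ n := by
        have h0 := hT0 y
        exact Real.rpow_nonneg (by positivity) n
      exact mul_le_mul_of_nonneg_left hexp hfy
    calc A ≤ ∫ y, (1 + ((y : EuclideanSpace ℝ (Fin d)) ⬝ᵥ (D *ᵥ (y : EuclideanSpace ℝ (Fin d)))) / n) ^ n * C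
          ∂(volume : Measure (EuclideanSpace ℝ (Fin d))).toSphere :=
        integral_mono intA (intB.mul_const C) hpt
      _ = B * C := integral_mul_const C _
      _ = C * B := mul_comm _ _
  -- finish
  intro x
  have hx0 := hT0 x
  have hfx : 0 < (1 + ((x : EuclideanSpace ℝ (Fin d)) ⬝ᵥ (D *ᵥ (x : EuclideanSpace ℝ (Fin d)))) / n) ^ n :=
    Real.rpow_pos_of_pos (by positivity) n
  have hgx : 0 < Real.exp ((x : EuclideanSpace ℝ (Fin d)) ⬝ᵥ (D *ᵥ (x : EuclideanSpace ℝ (Fin d)))) :=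
    Real.exp_pos _
  have hkey := key_ineq ((x : EuclideanSpace ℝ (Fin d)) ⬝ᵥ (D *ᵥ (x : EuclideanSpace ℝ (Fin d)))) n hx0 hn
  have hgfC : Real.exp ((x : EuclideanSpace ℝ (Fin d)) ⬝ᵥ (D *ᵥ (x : EuclideanSpace ℝ (Fin d))))
      ≤ (1 + ((x : EuclideanSpace ℝ (Fin d)) ⬝ᵥ (D *ᵥ (x : EuclideanSpace ℝ (Fin d)))) / n) ^ n * C := by
    refine hkey.2.trans ?_
    have h1 : ((x : EuclideanSpace ℝ (Fin d)) ⬝ᵥ (D *ᵥ (x : EuclideanSpace ℝ (Fin d)))) ^ 2 ≤ Dmax ^ 2 :=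
      pow_le_pow_left₀ hx0 (hTmax x) 2
    have hexp : Real.exp (((x : EuclideanSpace ℝ (Fin d)) ⬝ᵥ (D *ᵥ (x : EuclideanSpace ℝ (Fin d)))) ^ 2 / (2 * n)) ≤ C := by
      rw [hC, Real.exp_le_exp]
      exact div_le_div_of_nonneg_right h1 (by linarith)
    exact mul_le_mul_of_nonneg_left hexp hfx.le
  -- rewrite the densities
  rw [hp x, hq x, hQ x]
  have hBeq : ∫ y, ((y : EuclideanSpace ℝ (Fin d)) ⬝ᵥ ((1 + n⁻¹ • D) *ᵥ (y : EuclideanSpace ℝ (Fin d)))) ^ n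
      ∂(volume : Measure (EuclideanSpace ℝ (Fin d))).toSphere = B := by
    rw [hB]
    congr 1
    funext y
    rw [hQ y]
  rw [hBeq]
  set g := Real.exp ((x : EuclideanSpace ℝ (Fin d)) ⬝ᵥ (D *ᵥ (x : EuclideanSpace ℝ (Fin d)))) with hg
  set f := (1 + ((x : EuclideanSpace ℝ (Fin d)) ⬝ᵥ (D *ᵥ (x : EuclideanSpace ℝ (Fin d)))) / n) ^ n with hfd
  constructor
  · have heq : g / A / (f / B) = g * B / (f * A) := by
      field_simp
    rw [heq, div_le_iff₀ (mul_pos hfx hApos)]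
    have h := mul_le_mul hgfC hBA hBpos.le (mul_nonneg hfx.le (Real.exp_pos _).le)
    have h2 : f * C * A = C * (f * A) := by ring
    linarith
  · have heq : f / B / (g / A) = f * A / (g * B) := by
      field_simp
    rw [heq, div_le_iff₀ (mul_pos hgx hBpos)]
    have h := mul_le_mul hkey.1 hAB hApos.le hgx.le
    have h2 : g * (C * B) = C * (g * B) := by ring
    linarith
end

section
/- Let d ≥ 2, let D ∈ ℝ^{d×d} be a diagonal positive semidefinite matrix with largest diagonal entry D_max and smallest diagonal entry equal to 0, and let n ≥ 1 be a real number. Let σ denote the uniform surface measure on the unit sphere S^{d−1} ⊂ ℝ^d, and define the normalized densities p(x) = exp(xᵀDx) / ∫_{S^{d−1}} exp(yᵀDy) dσ(y) and q(x) = (xᵀ(I + D/n)x)^n / ∫_{S^{d−1}} (yᵀ(I + D/n)y)^n dσ(y). If v is a unit vector with Dv = 0, then 1 ≤ q(v)/p(v) ≤ exp(D_max²/(2n)). -/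
open Matrix Real MeasureTheory

private lemma aux_log_lower {u : ℝ} (hu : 0 ≤ u) : u - u ^ 2 / 2 ≤ Real.log (1 + u) := by
  set f : ℝ → ℝ := fun u => Real.log (1 + u) - u + u ^ 2 / 2 with hf
  have hderiv : ∀ x ∈ Set.Ioi (0:ℝ), HasDerivAt f (1 / (1 + x) - 1 + x) x := by
    intro x hx
    have hx0 : (0:ℝ) < x := hx
    have h1 : HasDerivAt (fun u : ℝ => Real.log (1 + u)) (1 / (1 + x)) x := by
      have := ((hasDerivAt_id x).const_add 1).log (by simp only [id_eq]; intro h; linarith)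
      simpa using this
    have h3 : HasDerivAt (fun u : ℝ => u ^ 2 / 2) x x := by
      simpa using (hasDerivAt_pow 2 x).div_const 2
    exact (h1.sub (hasDerivAt_id x)).add h3
  have hmono : MonotoneOn f (Set.Ici (0:ℝ)) := by
    apply monotoneOn_of_deriv_nonneg (convex_Ici 0)
    · apply ContinuousOn.add
      · apply ContinuousOn.sub
        · apply ContinuousOn.log (by fun_prop)
          intro x hx
          have : (0:ℝ) ≤ x := hx
          intro h; linarith
        · fun_prop
      · fun_prop
    · intro x hx
      rw [interior_Ici] at hx
      exact ((hderiv x hx).differentiableAt).differentiableWithinAt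
    · intro x hx
      rw [interior_Ici] at hx
      rw [(hderiv x hx).deriv]
      have hx0 : (0:ℝ) < x := hx
      have h1 : (0:ℝ) < 1 + x := by linarith
      have heq : 1 / (1 + x) - 1 + x = x ^ 2 / (1 + x) := by field_simp; ring
      rw [heq]; positivity
  have h0 : f 0 ≤ f u := hmono (Set.self_mem_Ici) hu hu
  simp only [hf] at h0
  simp only [add_zero, Real.log_one] at h0
  linarith

private lemma aux_exp_le {u : ℝ} (hu : 0 ≤ u) : Real.exp (u - u ^ 2 / 2) ≤ 1 + u := by
  have h1 : (0:ℝ) < 1 + u := by linarith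
  calc Real.exp (u - u ^ 2 / 2) ≤ Real.exp (Real.log (1 + u)) :=
        Real.exp_le_exp.2 (aux_log_lower hu)
    _ = 1 + u := Real.exp_log h1

private lemma aux_pow_le_exp {t n : ℝ} (ht : 0 ≤ t) (hn : 1 ≤ n) :
    (1 + t / n) ^ n ≤ Real.exp t := by
  have hn0 : 0 < n := lt_of_lt_of_le one_pos hn
  have h0 : (0:ℝ) < 1 + t / n := by positivity
  rw [Real.rpow_def_of_pos h0]
  apply Real.exp_le_exp.2
  have hlog : Real.log (1 + t / n) ≤ t / n := by
    have := Real.log_le_sub_one_of_pos h0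
    linarith
  calc Real.log (1 + t / n) * n ≤ t / n * n :=
        mul_le_mul_of_nonneg_right hlog hn0.le
    _ = t := by field_simp

private lemma aux_exp_le_pow_mul {t n : ℝ} (ht : 0 ≤ t) (hn : 1 ≤ n) :
    Real.exp t ≤ (1 + t / n) ^ n * Real.exp (t ^ 2 / (2 * n)) := by
  have hn0 : 0 < n := lt_of_lt_of_le one_pos hn
  have hu : 0 ≤ t / n := by positivity
  have key : Real.exp (t - t ^ 2 / (2 * n)) ≤ (1 + t / n) ^ n := by
    have h := aux_exp_le hu
    have h2 := Real.rpow_le_rpow (Real.exp_nonneg _) h hn0.le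
    have h3 : (Real.exp (t / n - (t / n) ^ 2 / 2)) ^ n
        = Real.exp (t - t ^ 2 / (2 * n)) := by
      rw [← Real.exp_mul]
      congr 1
      field_simp
    rwa [h3] at h2
  have hsplit : Real.exp t = Real.exp (t - t ^ 2 / (2 * n)) * Real.exp (t ^ 2 / (2 * n)) := by
    rw [← Real.exp_add]; ring_nf
  rw [hsplit]
  exact mul_le_mul_of_nonneg_right key (Real.exp_nonneg _)

theorem stmt_3 (d : ℕ) (hd : 2 ≤ d) (D : Matrix (Fin d) (Fin d) ℝ)
    (hdiag : D.IsDiag) (hpsd : ∀ i, 0 ≤ D i i)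
    (Dmax : ℝ) (hle : ∀ i, D i i ≤ Dmax) (hmem : ∃ i, D i i = Dmax)
    (hmin : ∃ i, D i i = 0)
    (n : ℝ) (hn : 1 ≤ n)
    (σ : Measure (Metric.sphere (0 : EuclideanSpace ℝ (Fin d)) 1))
    (hσ : σ = (volume : Measure (EuclideanSpace ℝ (Fin d))).toSphere)
    (p q : Metric.sphere (0 : EuclideanSpace ℝ (Fin d)) 1 → ℝ)
    (hp : ∀ x, p x = Real.exp ((x : EuclideanSpace ℝ (Fin d)) ⬝ᵥ (D *ᵥ (x : EuclideanSpace ℝ (Fin d)))) /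
        ∫ y, Real.exp ((y : EuclideanSpace ℝ (Fin d)) ⬝ᵥ (D *ᵥ (y : EuclideanSpace ℝ (Fin d)))) ∂σ)
    (hq : ∀ x, q x = ((x : EuclideanSpace ℝ (Fin d)) ⬝ᵥ ((1 + n⁻¹ • D) *ᵥ (x : EuclideanSpace ℝ (Fin d)))) ^ n /
        ∫ y, ((y : EuclideanSpace ℝ (Fin d)) ⬝ᵥ ((1 + n⁻¹ • D) *ᵥ (y : EuclideanSpace ℝ (Fin d)))) ^ n ∂σ)
    (v : Metric.sphere (0 : EuclideanSpace ℝ (Fin d)) 1)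
    (hv : D *ᵥ (v : EuclideanSpace ℝ (Fin d)) = 0) :
    1 ≤ q v / p v ∧ q v / p v ≤ Real.exp (Dmax ^ 2 / (2 * n)) := by
  subst hσ
  have hn0 : 0 < n := lt_of_lt_of_le one_pos hn
  -- sum of squares of coordinates is 1 on the sphere
  have hsq : ∀ y : Metric.sphere (0 : EuclideanSpace ℝ (Fin d)) 1,
      ∑ i, ((y : EuclideanSpace ℝ (Fin d)) i) ^ 2 = 1 := by
    intro y
    have hy : ‖(y : EuclideanSpace ℝ (Fin d))‖ = 1 := by
      simpa using mem_sphere_zero_iff_norm.mp y.2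
    rw [EuclideanSpace.norm_eq] at hy
    have h2 := congrArg (· ^ 2) hy
    simp only [one_pow] at h2
    rw [Real.sq_sqrt (by positivity)] at h2
    simpa [sq_abs] using h2
  -- mulVec for diagonal matrices
  have hmv : ∀ (x : Fin d → ℝ) (i : Fin d), (D *ᵥ x) i = D i i * x i := by
    intro x i
    rw [mulVec, dotProduct]
    exact Finset.sum_eq_single i (fun j _ hj => by rw [hdiag (Ne.symm hj), zero_mul])
      (fun h => absurd (Finset.mem_univ i) h)
  have ht_eq : ∀ y : Metric.sphere (0 : EuclideanSpace ℝ (Fin d)) 1,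
      (y : EuclideanSpace ℝ (Fin d)) ⬝ᵥ (D *ᵥ (y : EuclideanSpace ℝ (Fin d)))
        = ∑ i, D i i * ((y : EuclideanSpace ℝ (Fin d)) i) ^ 2 := by
    intro y
    rw [dotProduct]
    refine Finset.sum_congr rfl fun i _ => ?_
    rw [hmv]; ring
  have ht0 : ∀ y : Metric.sphere (0 : EuclideanSpace ℝ (Fin d)) 1,
      0 ≤ (y : EuclideanSpace ℝ (Fin d)) ⬝ᵥ (D *ᵥ (y : EuclideanSpace ℝ (Fin d))) := by
    intro y
    rw [ht_eq]
    exact Finset.sum_nonneg fun i _ => mul_nonneg (hpsd i) (sq_nonneg _)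
  have hDmax0 : 0 ≤ Dmax := by
    obtain ⟨i, hi⟩ := hmin
    calc (0:ℝ) = D i i := hi.symm
      _ ≤ Dmax := hle i
  have htm : ∀ y : Metric.sphere (0 : EuclideanSpace ℝ (Fin d)) 1,
      (y : EuclideanSpace ℝ (Fin d)) ⬝ᵥ (D *ᵥ (y : EuclideanSpace ℝ (Fin d))) ≤ Dmax := by
    intro y
    rw [ht_eq]
    calc ∑ i, D i i * ((y : EuclideanSpace ℝ (Fin d)) i) ^ 2
        ≤ ∑ i, Dmax * ((y : EuclideanSpace ℝ (Fin d)) i) ^ 2 :=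
          Finset.sum_le_sum fun i _ => mul_le_mul_of_nonneg_right (hle i) (sq_nonneg _)
      _ = Dmax := by rw [← Finset.mul_sum, hsq y, mul_one]
  -- the quadratic form of 1 + n⁻¹ • D
  have hform : ∀ y : Metric.sphere (0 : EuclideanSpace ℝ (Fin d)) 1,
      (y : EuclideanSpace ℝ (Fin d)) ⬝ᵥ ((1 + n⁻¹ • D) *ᵥ (y : EuclideanSpace ℝ (Fin d)))
        = 1 + ((y : EuclideanSpace ℝ (Fin d)) ⬝ᵥ (D *ᵥ (y : EuclideanSpace ℝ (Fin d)))) / n := by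
    intro y
    have h1 : (y : EuclideanSpace ℝ (Fin d)) ⬝ᵥ (y : EuclideanSpace ℝ (Fin d)) = 1 := by
      rw [dotProduct]
      calc ∑ i, (y : EuclideanSpace ℝ (Fin d)) i * (y : EuclideanSpace ℝ (Fin d)) i
          = ∑ i, ((y : EuclideanSpace ℝ (Fin d)) i) ^ 2 :=
            Finset.sum_congr rfl fun i _ => (sq _).symm
        _ = 1 := hsq y
    rw [Matrix.add_mulVec, Matrix.one_mulVec, dotProduct_add, Matrix.smul_mulVec,
      dotProduct_smul, h1, smul_eq_mul]
    ring
  -- continuity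
  have hc : Continuous fun x : EuclideanSpace ℝ (Fin d) => x ⬝ᵥ (D *ᵥ x) := by
    simp only [dotProduct, mulVec]
    fun_prop
  have hct : Continuous fun y : Metric.sphere (0 : EuclideanSpace ℝ (Fin d)) 1 =>
      (y : EuclideanSpace ℝ (Fin d)) ⬝ᵥ (D *ᵥ (y : EuclideanSpace ℝ (Fin d))) :=
    hc.comp continuous_subtype_val
  have hIntOf : ∀ f : Metric.sphere (0 : EuclideanSpace ℝ (Fin d)) 1 → ℝ, Continuous f →
      Integrable f (volume : Measure (EuclideanSpace ℝ (Fin d))).toSphere := by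
    intro f hf
    apply hf.integrable_of_hasCompactSupport
    exact IsCompact.of_isClosed_subset isCompact_univ (isClosed_tsupport _) (Set.subset_univ _)
  have hIA : Integrable (fun y : Metric.sphere (0 : EuclideanSpace ℝ (Fin d)) 1 =>
      Real.exp ((y : EuclideanSpace ℝ (Fin d)) ⬝ᵥ (D *ᵥ (y : EuclideanSpace ℝ (Fin d)))))
      (volume : Measure (EuclideanSpace ℝ (Fin d))).toSphere := hIntOf _ hct.rexp
  have hIB : Integrable (fun y : Metric.sphere (0 : EuclideanSpace ℝ (Fin d)) 1 =>
      (1 + ((y : EuclideanSpace ℝ (Fin d)) ⬝ᵥ (D *ᵥ (y : EuclideanSpace ℝ (Fin d)))) / n) ^ n)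
      (volume : Measure (EuclideanSpace ℝ (Fin d))).toSphere := by
    apply hIntOf
    apply Continuous.rpow_const (continuous_const.add (hct.div_const n))
    intro x
    exact Or.inr (by linarith)
  set A := ∫ y, Real.exp ((y : EuclideanSpace ℝ (Fin d)) ⬝ᵥ
      (D *ᵥ (y : EuclideanSpace ℝ (Fin d)))) ∂(volume : Measure (EuclideanSpace ℝ (Fin d))).toSphere
    with hAdef
  set B := ∫ y, (1 + ((y : EuclideanSpace ℝ (Fin d)) ⬝ᵥ
      (D *ᵥ (y : EuclideanSpace ℝ (Fin d)))) / n) ^ n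
      ∂(volume : Measure (EuclideanSpace ℝ (Fin d))).toSphere with hBdef
  have hBeq : (∫ y, ((y : EuclideanSpace ℝ (Fin d)) ⬝ᵥ
      ((1 + n⁻¹ • D) *ᵥ (y : EuclideanSpace ℝ (Fin d)))) ^ n
      ∂(volume : Measure (EuclideanSpace ℝ (Fin d))).toSphere) = B := by
    rw [hBdef]
    simp only [hform]
  have hBA : B ≤ A := integral_mono hIB hIA fun y => aux_pow_le_exp (ht0 y) hn
  have hAB : A ≤ B * Real.exp (Dmax ^ 2 / (2 * n)) := by
    calc A ≤ ∫ y, (1 + ((y : EuclideanSpace ℝ (Fin d)) ⬝ᵥ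
          (D *ᵥ (y : EuclideanSpace ℝ (Fin d)))) / n) ^ n * Real.exp (Dmax ^ 2 / (2 * n))
          ∂(volume : Measure (EuclideanSpace ℝ (Fin d))).toSphere := by
          apply integral_mono hIA (hIB.mul_const _)
          intro y
          have ht := ht0 y
          have htM := htm y
          have h1 := aux_exp_le_pow_mul ht hn
          have h2 : ((y : EuclideanSpace ℝ (Fin d)) ⬝ᵥ
              (D *ᵥ (y : EuclideanSpace ℝ (Fin d)))) ^ 2 ≤ Dmax ^ 2 :=
            pow_le_pow_left₀ ht htM 2
          have h3 : Real.exp (((y : EuclideanSpace ℝ (Fin d)) ⬝ᵥ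
              (D *ᵥ (y : EuclideanSpace ℝ (Fin d)))) ^ 2 / (2 * n))
              ≤ Real.exp (Dmax ^ 2 / (2 * n)) := by
            apply Real.exp_le_exp.2
            rw [div_le_div_iff_of_pos_right (by linarith : (0:ℝ) < 2 * n)]
            exact h2
          calc Real.exp ((y : EuclideanSpace ℝ (Fin d)) ⬝ᵥ (D *ᵥ (y : EuclideanSpace ℝ (Fin d))))
              ≤ (1 + ((y : EuclideanSpace ℝ (Fin d)) ⬝ᵥ (D *ᵥ (y : EuclideanSpace ℝ (Fin d)))) / n) ^ n
                * Real.exp (((y : EuclideanSpace ℝ (Fin d)) ⬝ᵥ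
                    (D *ᵥ (y : EuclideanSpace ℝ (Fin d)))) ^ 2 / (2 * n)) := h1
            _ ≤ (1 + ((y : EuclideanSpace ℝ (Fin d)) ⬝ᵥ (D *ᵥ (y : EuclideanSpace ℝ (Fin d)))) / n) ^ n
                * Real.exp (Dmax ^ 2 / (2 * n)) :=
              mul_le_mul_of_nonneg_left h3 (Real.rpow_nonneg (by positivity) _)
      _ = B * Real.exp (Dmax ^ 2 / (2 * n)) := integral_mul_const _ _
  have hμ : 0 < ((volume : Measure (EuclideanSpace ℝ (Fin d))).toSphere Set.univ).toReal := by
    apply ENNReal.toReal_pos _ (measure_ne_top _ _)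
    rw [Measure.toSphere_apply_univ]
    apply mul_ne_zero
    · simp only [ne_eq, Nat.cast_eq_zero]
      rw [finrank_euclideanSpace_fin]
      omega
    · exact (Metric.measure_ball_pos _ _ one_pos).ne'
  have hB1 : ((volume : Measure (EuclideanSpace ℝ (Fin d))).toSphere Set.univ).toReal ≤ B := by
    have hpt : ∀ y : Metric.sphere (0 : EuclideanSpace ℝ (Fin d)) 1,
        (1:ℝ) ≤ (1 + ((y : EuclideanSpace ℝ (Fin d)) ⬝ᵥ
          (D *ᵥ (y : EuclideanSpace ℝ (Fin d)))) / n) ^ n := by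
      intro y
      have h0 : (1:ℝ) ≤ 1 + ((y : EuclideanSpace ℝ (Fin d)) ⬝ᵥ
          (D *ᵥ (y : EuclideanSpace ℝ (Fin d)))) / n := by
        have := ht0 y
        have : 0 ≤ ((y : EuclideanSpace ℝ (Fin d)) ⬝ᵥ
            (D *ᵥ (y : EuclideanSpace ℝ (Fin d)))) / n := by positivity
        linarith
      calc (1:ℝ) = 1 ^ n := (Real.one_rpow n).symm
        _ ≤ _ := Real.rpow_le_rpow zero_le_one h0 hn0.le
    have hm := integral_mono (integrable_const (1:ℝ)) hIB hpt
    simpa [Measure.real, hBdef] using hm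
  have hBpos : 0 < B := lt_of_lt_of_le hμ hB1
  have hApos : 0 < A := lt_of_lt_of_le hBpos hBA
  have hpv : p v = 1 / A := by
    rw [hp v, hv, dotProduct_zero, Real.exp_zero]
  have hqv : q v = 1 / B := by
    rw [hq v]
    have hnum : (v : EuclideanSpace ℝ (Fin d)) ⬝ᵥ
        ((1 + n⁻¹ • D) *ᵥ (v : EuclideanSpace ℝ (Fin d))) = 1 := by
      rw [hform v, hv, dotProduct_zero]
      simp
    rw [hnum, Real.one_rpow]
    rw [hBeq]
  have hqp : q v / p v = A / B := by
    rw [hqv, hpv]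
    field_simp
  constructor
  · rw [hqp, le_div_iff₀ hBpos]
    linarith
  · rw [hqp, div_le_iff₀ hBpos]
    linarith
end
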